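/- Let n, m ≥ 1, let X be a set, let R ⊆ ℝ^m be a bounded set, and for each (x, r) ∈ X × R let P_{x,r} ⊆ ℝ^n be a finite set. For B ⊆ ℝ^n define S(B) = {r ∈ R : there exists x ∈ X with P_{x,r} ⊆ B}. Suppose c > 0 is a constant such that dim_M B ≥ c·dim_M S(B) for every bounded set B ⊆ ℝ^n. Then dim_P B' ≥ c·dim_P S(B') for every set B' ⊆ ℝ^n. -/

import Mathlib

open Set Filter Bornology

/-- Covering number of `E` by open balls of radius `ε`. -/
noncomputable def covNum {X : Type*} [PseudoMetricSpace X] (E : Set X) (ε : ℝ) : ℕ∞ :=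
  ⨅ (t : Finset X) (_ : E ⊆ ⋃ x ∈ t, Metric.ball x ε), (t.card : ℕ∞)

/-- Upper Minkowski (box-counting) dimension. -/
noncomputable def dimM {X : Type*} [PseudoMetricSpace X] (E : Set X) : ℝ :=
  limsup (fun ε : ℝ => Real.log ((covNum E ε).toNat) / Real.log (1 / ε))
    (nhdsWithin 0 (Ioi 0))

/-- Packing dimension, as modified upper box dimension: the infimum of
`⨆ j, dimM (E j)` over countable covers of the set by bounded sets. -/
noncomputable def dimP {X : Type*} [PseudoMetricSpace X] (E : Set X) : ℝ :=
  sInf { a : ℝ | ∃ f : ℕ → Set X, (E ⊆ ⋃ j, f j) ∧ (∀ j, IsBounded (f j)) ∧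
    a = ⨆ j, dimM (f j) }

namespace Stmt5Aux


variable {Y : Type*} [PseudoMetricSpace Y]

lemma covNum_le_card {E : Set Y} {ε : ℝ} {t : Finset Y}
    (h : E ⊆ ⋃ x ∈ t, Metric.ball x ε) : covNum E ε ≤ t.card :=
  iInf_le_of_le t (iInf_le _ h)

lemma covNum_mono {E F : Set Y} {ε : ℝ} (h : E ⊆ F) : covNum E ε ≤ covNum F ε :=
  le_iInf fun t => le_iInf fun ht => covNum_le_card (h.trans ht)

lemma covNum_empty (ε : ℝ) : covNum (∅ : Set Y) ε = 0 := by
  refine le_antisymm ?_ zero_le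
  simpa using covNum_le_card (E := (∅ : Set Y)) (ε := ε) (t := ∅) (by simp)

lemma exists_cover_le {E : Set Y} {ε : ℝ} (h : covNum E ε ≠ ⊤) :
    ∃ t : Finset Y, (E ⊆ ⋃ x ∈ t, Metric.ball x ε) ∧ (t.card : ℕ∞) ≤ covNum E ε := by
  classical
  have hlt : covNum E ε < covNum E ε + 1 := (ENat.lt_add_one_iff h).mpr le_rfl
  unfold covNum at hlt
  rw [iInf_lt_iff] at hlt
  obtain ⟨t, ht⟩ := hlt
  rw [iInf_lt_iff] at ht
  obtain ⟨hcov, hcard⟩ := ht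
  exact ⟨t, hcov, (ENat.lt_add_one_iff h).mp hcard⟩

lemma covNum_union_le (A B : Set Y) (ε : ℝ) :
    covNum (A ∪ B) ε ≤ covNum A ε + covNum B ε := by
  classical
  rcases eq_or_ne (covNum A ε) ⊤ with hA | hA
  · simp [hA]
  rcases eq_or_ne (covNum B ε) ⊤ with hB | hB
  · simp [hB]
  obtain ⟨tA, hcovA, hcardA⟩ := exists_cover_le hA
  obtain ⟨tB, hcovB, hcardB⟩ := exists_cover_le hB
  have hcov : A ∪ B ⊆ ⋃ x ∈ tA ∪ tB, Metric.ball x ε := by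
    rintro y (hy | hy)
    · obtain ⟨x, hx, hyx⟩ := Set.mem_iUnion₂.mp (hcovA hy)
      exact Set.mem_iUnion₂.mpr ⟨x, Finset.mem_union_left _ hx, hyx⟩
    · obtain ⟨x, hx, hyx⟩ := Set.mem_iUnion₂.mp (hcovB hy)
      exact Set.mem_iUnion₂.mpr ⟨x, Finset.mem_union_right _ hx, hyx⟩
  calc covNum (A ∪ B) ε ≤ ((tA ∪ tB).card : ℕ∞) := covNum_le_card hcov
    _ ≤ ((tA.card + tB.card : ℕ) : ℕ∞) := by exact_mod_cast Finset.card_union_le _ _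
    _ = (tA.card : ℕ∞) + tB.card := by push_cast; ring
    _ ≤ covNum A ε + covNum B ε := add_le_add hcardA hcardB



lemma covNum_le_grid {n : ℕ} (E : Set (EuclideanSpace ℝ (Fin n))) (K ε : ℝ)
    (hε : 0 < ε) (hE : E ⊆ Metric.closedBall 0 K) :
    covNum E ε ≤ (((2 * ⌈K * (n + 1) / ε⌉₊ + 1) ^ n : ℕ) : ℕ∞) := by
  classical
  set δ : ℝ := ε / (n + 1) with hδdef
  have hn1 : (0:ℝ) < n + 1 := by positivity
  have hδ : 0 < δ := div_pos hε hn1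
  set M : ℕ := ⌈K * (n + 1) / ε⌉₊ with hM
  have hKδ : K / δ ≤ M := by
    rw [hδdef, div_div_eq_mul_div]
    exact Nat.le_ceil _
  set grid : (Fin n → ℤ) → EuclideanSpace ℝ (Fin n) :=
    fun z => (WithLp.equiv 2 (Fin n → ℝ)).symm (fun i => δ * z i) with hgrid
  set t : Finset (EuclideanSpace ℝ (Fin n)) :=
    Finset.image grid (Fintype.piFinset fun _ => Finset.Icc (-(M : ℤ)) M) with ht
  have hcover : E ⊆ ⋃ x ∈ t, Metric.ball x ε := by
    intro e he
    have hnorm : ‖e‖ ≤ K := by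
      simpa [Metric.mem_closedBall, dist_zero_right] using hE he
    have hei : ∀ i, |e i| ≤ K := by
      intro i
      have h1 : |e i| = Real.sqrt ((e i) ^ 2) := (Real.sqrt_sq_eq_abs _).symm
      have h2 : Real.sqrt ((e i) ^ 2) ≤ ‖e‖ := by
        rw [EuclideanSpace.norm_eq]
        apply Real.sqrt_le_sqrt
        have h3 := Finset.single_le_sum (f := fun j => ‖e j‖ ^ 2)
          (fun j _ => by positivity) (Finset.mem_univ i)
        simpa [Real.norm_eq_abs, sq_abs] using h3
      linarith [h1 ▸ h2]
    set z : Fin n → ℤ := fun i => ⌊e i / δ⌋ with hz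
    have hmem : z ∈ Fintype.piFinset fun _ => Finset.Icc (-(M : ℤ)) M := by
      rw [Fintype.mem_piFinset]
      intro i
      have hup : e i / δ ≤ (M : ℝ) := by
        refine le_trans ?_ hKδ
        gcongr
        exact le_of_abs_le (hei i)
      have hlow : -(M : ℝ) ≤ e i / δ := by
        have h4 : -K / δ ≤ e i / δ := by
          gcongr
          exact neg_le_of_abs_le (hei i)
        have h5 : -(K / δ) ≤ e i / δ := by rwa [neg_div] at h4
        linarith
      rw [Finset.mem_Icc]
      constructor
      · rw [Int.le_floor]
        push_cast
        exact hlow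
      · calc ⌊e i / δ⌋ ≤ ⌊(M : ℝ)⌋ := Int.floor_le_floor hup
          _ = M := Int.floor_natCast M
    have hgz : ∀ i, grid z i = δ * ⌊e i / δ⌋ := fun i => rfl
    have hdist : dist e (grid z) < ε := by
      rw [EuclideanSpace.dist_eq]
      have hterm : ∀ i, dist (e i) (grid z i) ^ 2 ≤ δ ^ 2 := by
        intro i
        rw [hgz i, Real.dist_eq]
        have h6 : 0 ≤ e i - ⌊e i / δ⌋ * δ := Int.sub_floor_div_mul_nonneg (e i) hδ
        have h7 : e i - ⌊e i / δ⌋ * δ < δ := Int.sub_floor_div_mul_lt (e i) hδ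
        have h8 : |e i - δ * ⌊e i / δ⌋| ≤ δ := by
          rw [abs_le]
          constructor <;> nlinarith
        exact pow_le_pow_left₀ (abs_nonneg _) h8 2
      have hsum : ∑ i, dist (e i) (grid z i) ^ 2 ≤ n * δ ^ 2 := by
        calc ∑ i, dist (e i) (grid z i) ^ 2 ≤ ∑ _i : Fin n, δ ^ 2 :=
              Finset.sum_le_sum fun i _ => hterm i
          _ = n * δ ^ 2 := by simp [Finset.sum_const, Finset.card_univ, nsmul_eq_mul]
      have hfin : Real.sqrt (↑n * δ ^ 2) < ε := by
        have heq : ((n : ℝ) + 1) * δ = ε := by rw [hδdef]; field_simp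
        rw [show ε = Real.sqrt ((((n:ℝ) + 1) * δ) ^ 2) by
          rw [Real.sqrt_sq (by positivity)]; exact heq.symm]
        apply Real.sqrt_lt_sqrt (by positivity)
        nlinarith [mul_pos hδ hδ, sq_nonneg δ]
      calc Real.sqrt (∑ i, dist (e i) (grid z i) ^ 2) ≤ Real.sqrt (↑n * δ ^ 2) :=
            Real.sqrt_le_sqrt hsum
        _ < ε := hfin
    refine Set.mem_iUnion₂.mpr ⟨grid z, Finset.mem_image_of_mem _ hmem, ?_⟩
    exact Metric.mem_ball.mpr hdist
  refine le_trans (covNum_le_card hcover) ?_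
  have hcard : t.card ≤ (2 * M + 1) ^ n := by
    refine le_trans (Finset.card_image_le) ?_
    rw [Fintype.card_piFinset]
    have hc : (Finset.Icc (-(M : ℤ)) (M : ℤ)).card = 2 * M + 1 := by
      rw [Int.card_Icc]; omega
    simp [hc]
  exact_mod_cast hcard




lemma ratio_le {n : ℕ} (E : Set (EuclideanSpace ℝ (Fin n))) (K : ℝ) (hK : 0 ≤ K)
    (hE : E ⊆ Metric.closedBall 0 K) {ε : ℝ} (hε : ε ∈ Ioo (0:ℝ) 1) :
    Real.log ((covNum E ε).toNat) / Real.log (1 / ε)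
      ≤ n + n * Real.log (2 * K * (n + 1) + 3) / Real.log (1 / ε) := by
  obtain ⟨hε0, hε1⟩ := hε
  have hL : 0 < Real.log (1 / ε) := Real.log_pos (one_lt_one_div hε0 hε1)
  set D : ℝ := 2 * K * (n + 1) + 3 with hD
  have hD1 : (1:ℝ) ≤ D := by
    have : (0:ℝ) ≤ 2 * K * (n + 1) := by positivity
    linarith
  have hDlog : 0 ≤ Real.log D := Real.log_nonneg hD1
  set M : ℕ := ⌈K * (n + 1) / ε⌉₊ with hM
  set N : ℕ := (covNum E ε).toNat with hN
  have hNle : N ≤ (2 * M + 1) ^ n :=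
    ENat.toNat_le_toNat (covNum_le_grid E K ε hε0 hE) (ENat.coe_ne_top _)
  have key : Real.log N ≤ n * (Real.log D + Real.log (1 / ε)) := by
    have hMb : ((2 * M + 1 : ℕ) : ℝ) ≤ D / ε := by
      have h2 : (M : ℝ) < K * (n + 1) / ε + 1 := Nat.ceil_lt_add_one (by positivity)
      have h3 : (3:ℝ) ≤ 3 / ε := by
        rw [le_div_iff₀ hε0]; nlinarith
      have h4 : 2 * (K * (n + 1) / ε) + 3 / ε = D / ε := by
        rw [hD]; field_simp
      push_cast
      linarith
    have h8 : Real.log (D / ε) = Real.log D + Real.log (1 / ε) := by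
      rw [Real.log_div (by linarith) (ne_of_gt hε0),
        Real.log_div one_ne_zero (ne_of_gt hε0), Real.log_one]
      ring
    rcases Nat.eq_zero_or_pos N with h0 | hpos
    · rw [h0]
      simp only [Nat.cast_zero, Real.log_zero]
      positivity
    · have hN1 : (1:ℝ) ≤ (N:ℝ) := by exact_mod_cast hpos
      have h5 : Real.log N ≤ Real.log (((2 * M + 1) ^ n : ℕ) : ℝ) :=
        Real.log_le_log (by linarith) (by exact_mod_cast hNle)
      have h6 : Real.log (((2 * M + 1) ^ n : ℕ) : ℝ) = n * Real.log ((2 * M + 1 : ℕ) : ℝ) := by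
        push_cast
        rw [Real.log_pow]
      have h7 : Real.log ((2 * M + 1 : ℕ) : ℝ) ≤ Real.log (D / ε) :=
        Real.log_le_log (by positivity) hMb
      calc Real.log N ≤ n * Real.log ((2 * M + 1 : ℕ) : ℝ) := by rw [← h6]; exact h5
        _ ≤ n * Real.log (D / ε) := by
            apply mul_le_mul_of_nonneg_left h7 (by positivity)
        _ = n * (Real.log D + Real.log (1 / ε)) := by rw [h8]
  calc Real.log N / Real.log (1 / ε)
      ≤ (n * (Real.log D + Real.log (1 / ε))) / Real.log (1 / ε) := by gcongr
    _ = n + n * Real.log D / Real.log (1 / ε) := by field_simp; ring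

lemma ratio_nonneg {Y : Type*} [PseudoMetricSpace Y] (E : Set Y) {ε : ℝ}
    (hε : ε ∈ Ioo (0:ℝ) 1) :
    0 ≤ Real.log ((covNum E ε).toNat) / Real.log (1 / ε) :=
  div_nonneg (Real.log_natCast_nonneg _)
    (Real.log_nonneg (le_of_lt (one_lt_one_div hε.1 hε.2)))

lemma eventually_Ioo01 : ∀ᶠ ε in nhdsWithin (0:ℝ) (Ioi 0), ε ∈ Ioo (0:ℝ) 1 :=
  Ioo_mem_nhdsGT_of_mem ⟨le_refl 0, one_pos⟩

lemma cobounded_ratio {Y : Type*} [PseudoMetricSpace Y] (E : Set Y) :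
    IsCoboundedUnder (· ≤ ·) (nhdsWithin (0:ℝ) (Ioi 0))
      (fun ε : ℝ => Real.log ((covNum E ε).toNat) / Real.log (1 / ε)) :=
  isCoboundedUnder_le_of_eventually_le _ (x := 0)
    (eventually_Ioo01.mono fun _ hε => ratio_nonneg E hε)

lemma tendsto_logL : Tendsto (fun ε : ℝ => Real.log (1 / ε))
    (nhdsWithin (0:ℝ) (Ioi 0)) atTop := by
  have h1 : Tendsto (fun ε : ℝ => 1 / ε) (nhdsWithin (0:ℝ) (Ioi 0)) atTop := by
    simpa [one_div] using tendsto_inv_nhdsGT_zero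
  exact Real.tendsto_log_atTop.comp h1

lemma isBoundedUnder_ratio {n : ℕ} (E : Set (EuclideanSpace ℝ (Fin n)))
    (hE : IsBounded E) :
    IsBoundedUnder (· ≤ ·) (nhdsWithin (0:ℝ) (Ioi 0))
      (fun ε : ℝ => Real.log ((covNum E ε).toNat) / Real.log (1 / ε)) := by
  obtain ⟨r, hr⟩ := hE.subset_closedBall 0
  have hE' : E ⊆ Metric.closedBall 0 (max r 0) :=
    hr.trans (Metric.closedBall_subset_closedBall (le_max_left _ _))
  set D : ℝ := 2 * max r 0 * (n + 1) + 3 with hD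
  apply isBoundedUnder_of_eventually_le (a := n + n * Real.log D)
  have h2 : ∀ᶠ ε in nhdsWithin (0:ℝ) (Ioi 0), 1 ≤ Real.log (1 / ε) :=
    tendsto_logL.eventually_ge_atTop 1
  filter_upwards [eventually_Ioo01, h2] with ε hε hL1
  refine le_trans (ratio_le E (max r 0) (le_max_right _ _) hE' hε) ?_
  have hDlog : 0 ≤ Real.log D := by
    apply Real.log_nonneg
    have : (0:ℝ) ≤ 2 * max r 0 * (n + 1) := by positivity
    linarith
  have : n * Real.log D / Real.log (1 / ε) ≤ n * Real.log D := by
    apply div_le_self (by positivity) hL1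
  linarith

lemma dimM_nonneg {n : ℕ} (E : Set (EuclideanSpace ℝ (Fin n))) (hE : IsBounded E) :
    0 ≤ dimM E :=
  le_limsup_of_frequently_le
    ((eventually_Ioo01.mono fun _ hε => ratio_nonneg E hε).frequently)
    (isBoundedUnder_ratio E hE)

lemma dimM_le_dim {n : ℕ} (E : Set (EuclideanSpace ℝ (Fin n))) (hE : IsBounded E) :
    dimM E ≤ n := by
  apply le_of_forall_pos_le_add
  intro δ hδ
  obtain ⟨r, hr⟩ := hE.subset_closedBall 0
  have hE' : E ⊆ Metric.closedBall 0 (max r 0) :=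
    hr.trans (Metric.closedBall_subset_closedBall (le_max_left _ _))
  set D : ℝ := 2 * max r 0 * (n + 1) + 3 with hD
  have hDlog : 0 ≤ Real.log D := by
    apply Real.log_nonneg
    have : (0:ℝ) ≤ 2 * max r 0 * (n + 1) := by positivity
    linarith
  apply limsup_le_of_le (cobounded_ratio E)
  have h2 : ∀ᶠ ε in nhdsWithin (0:ℝ) (Ioi 0),
      max 1 (n * Real.log D / δ) ≤ Real.log (1 / ε) :=
    tendsto_logL.eventually_ge_atTop _
  filter_upwards [eventually_Ioo01, h2] with ε hε hL1
  refine le_trans (ratio_le E (max r 0) (le_max_right _ _) hE' hε) ?_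
  have hL0 : (1:ℝ) ≤ Real.log (1 / ε) := le_trans (le_max_left _ _) hL1
  have h3 : n * Real.log D / Real.log (1 / ε) ≤ δ := by
    rw [div_le_iff₀ (by linarith)]
    have h4 : n * Real.log D / δ ≤ Real.log (1 / ε) := le_trans (le_max_right _ _) hL1
    rw [div_le_iff₀ hδ] at h4
    linarith
  linarith




lemma dimM_empty {Y : Type*} [PseudoMetricSpace Y] : dimM (∅ : Set Y) = 0 := by
  have : (fun ε : ℝ => Real.log ((covNum (∅ : Set Y) ε).toNat) / Real.log (1 / ε))
      = fun _ => (0:ℝ) := by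
    funext ε
    rw [covNum_empty]
    simp
  rw [dimM, this, limsup_const]

lemma log_div_le_aux {NA NB NU : ℕ} (h : NU ≤ NA + NB) (hAB : NA ≤ NB) {L : ℝ}
    (hL : 1 ≤ L) :
    Real.log NU / L ≤ Real.log NB / L + Real.log 2 / L := by
  have hL0 : (0:ℝ) < L := by linarith
  rcases Nat.eq_zero_or_pos NB with h0 | h1
  · have hNU : NU = 0 := by omega
    have hlog2 : (0:ℝ) ≤ Real.log 2 := Real.log_nonneg (by norm_num)
    rw [hNU, h0]
    simp only [Nat.cast_zero, Real.log_zero, zero_div, zero_add]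
    positivity
  · have hNU2 : NU ≤ 2 * NB := by omega
    have hlogNU : Real.log NU ≤ Real.log ((2 * NB : ℕ) : ℝ) := by
      rcases Nat.eq_zero_or_pos NU with hz | hpos
      · rw [hz]
        simpa using Real.log_natCast_nonneg (2 * NB)
      · exact Real.log_le_log (by exact_mod_cast hpos) (by exact_mod_cast hNU2)
    have hsplit : Real.log ((2 * NB : ℕ) : ℝ) = Real.log 2 + Real.log NB := by
      push_cast
      rw [Real.log_mul (by norm_num) (by exact_mod_cast h1.ne')]
    calc Real.log NU / L ≤ Real.log ((2 * NB : ℕ) : ℝ) / L := by gcongr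
      _ = Real.log NB / L + Real.log 2 / L := by rw [hsplit]; ring
  
lemma log_div_le {NA NB NU : ℕ} (h : NU ≤ NA + NB) {L : ℝ} (hL : 1 ≤ L) :
    Real.log NU / L ≤ max (Real.log NA / L) (Real.log NB / L) + Real.log 2 / L := by
  rcases le_total NA NB with hab | hab
  · exact le_trans (log_div_le_aux h hab hL)
      (by gcongr; exact le_max_right _ _)
  · exact le_trans (log_div_le_aux (by omega) hab hL)
      (by gcongr; exact le_max_left _ _)

lemma covNum_ne_top {n : ℕ} (E : Set (EuclideanSpace ℝ (Fin n))) (hE : IsBounded E)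
    {ε : ℝ} (hε : 0 < ε) : covNum E ε ≠ ⊤ := by
  obtain ⟨r, hr⟩ := hE.subset_closedBall 0
  exact ne_top_of_le_ne_top (ENat.coe_ne_top _) (covNum_le_grid E r ε hε hr)

lemma dimM_union_le {n : ℕ} {A B : Set (EuclideanSpace ℝ (Fin n))}
    (hA : IsBounded A) (hB : IsBounded B) :
    dimM (A ∪ B) ≤ max (dimM A) (dimM B) := by
  apply le_of_forall_pos_le_add
  intro δ hδ
  set M : ℝ := max (dimM A) (dimM B) with hMdef
  have hMA : dimM A < M + δ / 2 := by
    have h := le_max_left (dimM A) (dimM B)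
    rw [← hMdef] at h
    linarith
  have hMB : dimM B < M + δ / 2 := by
    have h := le_max_right (dimM A) (dimM B)
    rw [← hMdef] at h
    linarith
  have hAlt : ∀ᶠ ε in nhdsWithin (0:ℝ) (Ioi 0),
      Real.log ((covNum A ε).toNat) / Real.log (1 / ε) < M + δ / 2 :=
    eventually_lt_of_limsup_lt hMA (isBoundedUnder_ratio A hA)
  have hBlt : ∀ᶠ ε in nhdsWithin (0:ℝ) (Ioi 0),
      Real.log ((covNum B ε).toNat) / Real.log (1 / ε) < M + δ / 2 :=
    eventually_lt_of_limsup_lt hMB (isBoundedUnder_ratio B hB)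
  have hLbig : ∀ᶠ ε in nhdsWithin (0:ℝ) (Ioi 0),
      max 1 (Real.log 2 * (2 / δ)) ≤ Real.log (1 / ε) :=
    tendsto_logL.eventually_ge_atTop _
  apply limsup_le_of_le (cobounded_ratio _)
  filter_upwards [eventually_Ioo01, hAlt, hBlt, hLbig] with ε hε hfA hfB hL
  have hL1 : (1:ℝ) ≤ Real.log (1 / ε) := le_trans (le_max_left _ _) hL
  have hL0 : (0:ℝ) < Real.log (1 / ε) := by linarith
  have hAtop := covNum_ne_top A hA hε.1
  have hBtop := covNum_ne_top B hB hε.1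
  have hsum : covNum A ε + covNum B ε ≠ ⊤ := by
    rw [show covNum A ε + covNum B ε ≠ ⊤ ↔ _ from WithTop.add_ne_top]
    exact ⟨hAtop, hBtop⟩
  have hNU : (covNum (A ∪ B) ε).toNat ≤ (covNum A ε).toNat + (covNum B ε).toNat := by
    have h1 := ENat.toNat_le_toNat (covNum_union_le A B ε) hsum
    rwa [ENat.toNat_add hAtop hBtop] at h1
  have hkey := log_div_le (NA := (covNum A ε).toNat) (NB := (covNum B ε).toNat)
    (NU := (covNum (A ∪ B) ε).toNat) hNU hL1
  have hlog2 : Real.log 2 / Real.log (1 / ε) ≤ δ / 2 := by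
    rw [div_le_iff₀ hL0]
    have h4 : Real.log 2 * (2 / δ) ≤ Real.log (1 / ε) := le_trans (le_max_right _ _) hL
    have hδ2 : (0:ℝ) < δ / 2 := by linarith
    have h5 : δ / 2 * (Real.log 2 * (2 / δ)) = Real.log 2 := by field_simp
    nlinarith [mul_le_mul_of_nonneg_left h4 hδ2.le]
  have hmax : max (Real.log ((covNum A ε).toNat) / Real.log (1 / ε))
      (Real.log ((covNum B ε).toNat) / Real.log (1 / ε)) < M + δ / 2 :=
    max_lt hfA hfB
  calc Real.log ((covNum (A ∪ B) ε).toNat) / Real.log (1 / ε)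
      ≤ max (Real.log ((covNum A ε).toNat) / Real.log (1 / ε))
          (Real.log ((covNum B ε).toNat) / Real.log (1 / ε))
        + Real.log 2 / Real.log (1 / ε) := hkey
    _ ≤ (M + δ / 2) + δ / 2 := add_le_add hmax.le hlog2
    _ = M + δ := by ring




lemma isBounded_partialUnion {n : ℕ} (f : ℕ → Set (EuclideanSpace ℝ (Fin n)))
    (hb : ∀ j, IsBounded (f j)) (k : ℕ) :
    IsBounded (⋃ j ∈ Finset.range (k + 1), f j) :=
  (Bornology.isBounded_biUnion_finset (Finset.range (k + 1))).mpr (fun i _ => hb i)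

lemma dimM_partialUnion_le {n : ℕ} (f : ℕ → Set (EuclideanSpace ℝ (Fin n)))
    (hb : ∀ j, IsBounded (f j)) (a : ℝ) (h : ∀ j, dimM (f j) ≤ a) (k : ℕ) :
    dimM (⋃ j ∈ Finset.range (k + 1), f j) ≤ a := by
  classical
  induction k with
  | zero => simpa [Finset.range_one] using h 0
  | succ k ih =>
    have hins : (⋃ j ∈ Finset.range (k + 2), f j)
        = f (k + 1) ∪ ⋃ j ∈ Finset.range (k + 1), f j := by
      rw [Finset.range_add_one]
      exact Finset.set_biUnion_insert (k + 1) (Finset.range (k + 1)) f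
    rw [hins]
    refine le_trans (dimM_union_le (hb _) (isBounded_partialUnion f hb k)) ?_
    exact max_le (h _) ih

/-- The defining set for `dimP` is nonempty. -/
lemma dimP_set_nonempty {n : ℕ} (E : Set (EuclideanSpace ℝ (Fin n))) :
    { a : ℝ | ∃ f : ℕ → Set (EuclideanSpace ℝ (Fin n)),
      (E ⊆ ⋃ j, f j) ∧ (∀ j, IsBounded (f j)) ∧ a = ⨆ j, dimM (f j) }.Nonempty := by
  refine ⟨_, fun j => E ∩ Metric.ball 0 (j + 1), ?_, ?_, rfl⟩
  · intro x hx
    obtain ⟨j, hj⟩ := exists_nat_gt ‖x‖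
    refine Set.mem_iUnion.mpr ⟨j, hx, ?_⟩
    rw [Metric.mem_ball, dist_zero_right]
    linarith
  · exact fun j => Metric.isBounded_ball.subset inter_subset_right

lemma dimP_set_bddBelow {n : ℕ} (E : Set (EuclideanSpace ℝ (Fin n))) :
    BddBelow { a : ℝ | ∃ f : ℕ → Set (EuclideanSpace ℝ (Fin n)),
      (E ⊆ ⋃ j, f j) ∧ (∀ j, IsBounded (f j)) ∧ a = ⨆ j, dimM (f j) } := by
  refine ⟨0, ?_⟩
  rintro a ⟨f, _, hb, rfl⟩
  exact Real.iSup_nonneg fun j => dimM_nonneg _ (hb j)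

end Stmt5Aux

open Stmt5Aux

/-- Suppose each `P x r` (for `x ∈ X`, `r ∈ R`, with `R ⊆ ℝ^m` bounded) is a finite subset of
`ℝ^n`, and `S(B) = {r ∈ R : ∃ x, P x r ⊆ B}`. If `dim_M B ≥ c · dim_M S(B)` for every
bounded `B`, then `dim_P B' ≥ c · dim_P S(B')` for every set `B'`. -/
theorem stmt5 (n m : ℕ) (hn : 1 ≤ n) (hm : 1 ≤ m) (X : Type*)
    (R : Set (EuclideanSpace ℝ (Fin m))) (hR : IsBounded R)
    (P : X → EuclideanSpace ℝ (Fin m) → Set (EuclideanSpace ℝ (Fin n)))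
    (hP : ∀ x : X, ∀ r ∈ R, (P x r).Finite)
    (c : ℝ) (hc : 0 < c)
    (hyp : ∀ B : Set (EuclideanSpace ℝ (Fin n)), IsBounded B →
      c * dimM {r | r ∈ R ∧ ∃ x : X, P x r ⊆ B} ≤ dimM B) :
    ∀ B' : Set (EuclideanSpace ℝ (Fin n)),
      c * dimP {r | r ∈ R ∧ ∃ x : X, P x r ⊆ B'} ≤ dimP B' := by
  classical
  intro B'
  rw [show dimP B' = sInf { a : ℝ | ∃ f : ℕ → Set (EuclideanSpace ℝ (Fin n)),
      (B' ⊆ ⋃ j, f j) ∧ (∀ j, IsBounded (f j)) ∧ a = ⨆ j, dimM (f j) } from rfl]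
  refine le_csInf (dimP_set_nonempty B') ?_
  rintro a ⟨f, hcov, hbd, rfl⟩
  -- the partial unions
  set B : ℕ → Set (EuclideanSpace ℝ (Fin n)) :=
    fun k => ⋃ j ∈ Finset.range (k + 1), f j with hB
  have hBb : ∀ k, IsBounded (B k) := isBounded_partialUnion f hbd
  -- each dimM (f j) is at most the sup
  have hbdd : BddAbove (Set.range fun j => dimM (f j)) := by
    refine ⟨n, ?_⟩
    rintro y ⟨j, rfl⟩
    exact dimM_le_dim _ (hbd j)
  have hfja : ∀ j, dimM (f j) ≤ ⨆ j, dimM (f j) := fun j => le_ciSup hbdd j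
  have hanng : 0 ≤ ⨆ j, dimM (f j) := Real.iSup_nonneg fun j => dimM_nonneg _ (hbd j)
  have hBle : ∀ k, dimM (B k) ≤ ⨆ j, dimM (f j) :=
    dimM_partialUnion_le f hbd _ hfja
  -- cover of S(B') by the S(B k)
  have hScov : {r | r ∈ R ∧ ∃ x : X, P x r ⊆ B'}
      ⊆ ⋃ k, {r | r ∈ R ∧ ∃ x : X, P x r ⊆ B k} := by
    rintro r ⟨hrR, x, hx⟩
    have hfin : (P x r).Finite := hP x r hrR
    set jf : EuclideanSpace ℝ (Fin n) → ℕ :=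
      fun p => if h : ∃ j, p ∈ f j then h.choose else 0 with hjf
    have hjf_mem : ∀ p ∈ P x r, p ∈ f (jf p) := by
      intro p hp
      have hex : ∃ j, p ∈ f j := Set.mem_iUnion.mp (hcov (hx hp))
      simp only [hjf, dif_pos hex]
      exact hex.choose_spec
    set k : ℕ := hfin.toFinset.sup jf with hk
    refine Set.mem_iUnion.mpr ⟨k, hrR, x, ?_⟩
    intro p hp
    have hle : jf p ≤ k := Finset.le_sup (hfin.mem_toFinset.mpr hp)
    exact Set.mem_biUnion (Finset.mem_range.mpr (Nat.lt_succ_of_le hle)) (hjf_mem p hp)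
  -- bound dimP of S(B')
  have hle1 : dimP {r | r ∈ R ∧ ∃ x : X, P x r ⊆ B'}
      ≤ ⨆ k, dimM {r | r ∈ R ∧ ∃ x : X, P x r ⊆ B k} := by
    apply csInf_le (by
      -- bddBelow for the m-dimensional set
      refine ⟨0, ?_⟩
      rintro a ⟨g, _, hgb, rfl⟩
      exact Real.iSup_nonneg fun j => dimM_nonneg _ (hgb j))
    exact ⟨fun k => {r | r ∈ R ∧ ∃ x : X, P x r ⊆ B k}, hScov,
      fun k => hR.subset (fun r hr => hr.1), rfl⟩
  have hle2 : ∀ k, dimM {r | r ∈ R ∧ ∃ x : X, P x r ⊆ B k} ≤ (⨆ j, dimM (f j)) / c := by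
    intro k
    have h := hyp (B k) (hBb k)
    rw [le_div_iff₀ hc]
    calc dimM {r | r ∈ R ∧ ∃ x : X, P x r ⊆ B k} * c
        = c * dimM {r | r ∈ R ∧ ∃ x : X, P x r ⊆ B k} := by ring
      _ ≤ dimM (B k) := h
      _ ≤ ⨆ j, dimM (f j) := hBle k
  calc c * dimP {r | r ∈ R ∧ ∃ x : X, P x r ⊆ B'}
      ≤ c * ⨆ k, dimM {r | r ∈ R ∧ ∃ x : X, P x r ⊆ B k} :=
        mul_le_mul_of_nonneg_left hle1 hc.le
    _ ≤ c * ((⨆ j, dimM (f j)) / c) :=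
        mul_le_mul_of_nonneg_left (ciSup_le hle2) hc.le
    _ = ⨆ j, dimM (f j) := by field_simp
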